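/- arXiv:math/0503061 — 2 statements merged into one kernel-verified Lean document; each statement's English description precedes it below -/
import Mathlib

section
/- Let p > 1 be a real number, A ≥ 0, B ≥ 1, t ≥ 1 and c ≥ 1 integers, and let T > 0 be a real number with p^A T^{B−t} < 1 and p^{A+c} T^B < 1. Then the series ∑_{r=1}^∞ p^{Ar} T^{Br} ∑_{b ∈ {1,…,r}^c} μ_p(r; b) · T^{−t·min{r, b_1, …, b_c}} converges and its sum equals p^A T^{B−t} (1 − p^A T^B) / ( (1 − p^A T^{B−t}) (1 − p^{A+c} T^B) ). -/
open Finset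

noncomputable section

/-- `μ_p(a,b)`: the measure of elements of `pℤ_p/(p^a)` of valuation `b` (for `1 ≤ b ≤ a`). -/
def mu (p : ℝ) (a b : ℕ) : ℝ := if b = a then 1 else p ^ (a - b) * (1 - p⁻¹)

/-- `μ_p(a; b) = ∏_j μ_p(a, b_j)` for a tuple `b`. -/
def muV (p : ℝ) (a : ℕ) {k : ℕ} (b : Fin k → ℕ) : ℝ := ∏ j, mu p a (b j)

/-- `mins r f = min{r, f 0, …, f (k-1)}`. -/
def mins (r : ℕ) {k : ℕ} (f : Fin k → ℕ) : ℕ := (List.ofFn f).foldr min r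

lemma foldr_min_le_init (l : List ℕ) (r : ℕ) : l.foldr min r ≤ r := by
  induction l with
  | nil => simp
  | cons a l ih => exact le_trans (min_le_right _ _) ih

lemma foldr_min_le_mem {l : List ℕ} {a : ℕ} (h : a ∈ l) (r : ℕ) : l.foldr min r ≤ a := by
  induction l with
  | nil => simp at h
  | cons b l ih =>
    rcases List.mem_cons.1 h with h | h
    · subst h; exact min_le_left _ _
    · exact le_trans (min_le_right _ _) (ih h)

lemma le_foldr_min {l : List ℕ} {m r : ℕ} (hr : m ≤ r) (h : ∀ a ∈ l, m ≤ a) :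
    m ≤ l.foldr min r := by
  induction l with
  | nil => simpa
  | cons b l ih =>
    simp only [List.foldr_cons, le_min_iff]
    exact ⟨h b (List.mem_cons_self), ih fun a ha => h a (List.mem_cons_of_mem _ ha)⟩

lemma mins_le_self (r : ℕ) {k : ℕ} (f : Fin k → ℕ) : mins r f ≤ r := foldr_min_le_init _ _

lemma mins_le (r : ℕ) {k : ℕ} (f : Fin k → ℕ) (j : Fin k) : mins r f ≤ f j :=
  foldr_min_le_mem (List.mem_ofFn.2 ⟨j, rfl⟩) r

lemma le_mins {r m k : ℕ} {f : Fin k → ℕ} (hr : m ≤ r) (h : ∀ j, m ≤ f j) : m ≤ mins r f :=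
  le_foldr_min hr (by simpa [List.forall_mem_ofFn_iff] using h)

lemma sum_mu (p : ℝ) (hp : p ≠ 0) {r d : ℕ} (hd : d ≤ r) :
    ∑ b ∈ Icc (r - d) r, mu p r b = p ^ d := by
  induction d with
  | zero => simp [mu]
  | succ d ih =>
    have hd' : d ≤ r := Nat.le_of_succ_le hd
    have hins : Icc (r - (d + 1)) r = insert (r - (d + 1)) (Icc (r - d) r) := by
      ext x; simp only [mem_Icc, mem_insert]; omega
    rw [hins, Finset.sum_insert (by simp only [mem_Icc]; omega), ih hd']
    have hne : r - (d + 1) ≠ r := by omega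
    have hsub : r - (r - (d + 1)) = d + 1 := by omega
    rw [mu, if_neg hne, hsub]
    have h : p ^ (d + 1) * p⁻¹ = p ^ d := by
      rw [pow_succ, mul_assoc, mul_inv_cancel₀ hp, mul_one]
    nlinarith [h]

lemma sum_piFinset_prod (g : ℕ → ℝ) (s : Finset ℕ) (c : ℕ) :
    ∑ b ∈ Fintype.piFinset (fun _ : Fin c => s), ∏ j, g (b j) = (∑ a ∈ s, g a) ^ c := by
  rw [← Finset.prod_univ_sum]
  simp

lemma filter_mins_eq (c r m : ℕ) (hc : 1 ≤ c) (hm : 1 ≤ m) (hmr : m ≤ r) :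
    (Fintype.piFinset (fun _ : Fin c => Icc 1 r)).filter (fun b => mins r b = m)
      = Fintype.piFinset (fun _ : Fin c => Icc m r)
        \ Fintype.piFinset (fun _ : Fin c => Icc (m + 1) r) := by
  ext b
  simp only [mem_filter, Fintype.mem_piFinset, mem_Icc, mem_sdiff, not_forall]
  constructor
  · rintro ⟨hb, hmin⟩
    refine ⟨fun j => ⟨hmin ▸ mins_le r b j, (hb j).2⟩, ?_⟩
    by_contra hcon
    push_neg at hcon
    have hall : ∀ j, m + 1 ≤ b j ∧ b j ≤ r := hcon
    by_cases hmr' : m < r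
    · have h2 : m + 1 ≤ mins r b := le_mins hmr' fun j => (hall j).1
      omega
    · have j0 : Fin c := ⟨0, hc⟩
      have h3 := hall j0
      have h4 := (hb j0).2
      omega
  · rintro ⟨hall, j, hj⟩
    refine ⟨fun j => ⟨le_trans hm (hall j).1, (hall j).2⟩,
      le_antisymm ?_ (le_mins hmr fun j => (hall j).1)⟩
    have hjr := (hall j).2
    have hjm : b j ≤ m := by omega
    exact le_trans (mins_le r b j) hjm

lemma inner_sum_eq (p T : ℝ) (hp : 1 < p) (t c k : ℕ) (hc : 1 ≤ c) (hT : 0 < T) :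
    ∑ b ∈ Fintype.piFinset (fun _ : Fin c => Icc 1 (k + 1)),
        muV p (k + 1) b * T ^ (-(t * mins (k + 1) b : ℤ))
      = T ^ (-(t * (k + 1) : ℤ))
        + ∑ m ∈ Icc 1 k, ((p ^ (k + 1 - m)) ^ c - (p ^ (k - m)) ^ c) * T ^ (-(t * m : ℤ)) := by
  have hp0 : p ≠ 0 := by positivity
  have hmaps : ∀ b ∈ Fintype.piFinset (fun _ : Fin c => Icc 1 (k + 1)),
      mins (k + 1) b ∈ Icc 1 (k + 1) := by
    intro b hb
    simp only [Fintype.mem_piFinset, mem_Icc] at hb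
    exact mem_Icc.2 ⟨le_mins (Nat.succ_le_succ (Nat.zero_le _)) fun j => (hb j).1,
      mins_le_self _ _⟩
  rw [← Finset.sum_fiberwise_of_maps_to hmaps
    (fun b => muV p (k + 1) b * T ^ (-(t * mins (k + 1) b : ℤ)))]
  have hstep : ∀ m ∈ Icc 1 (k + 1),
      (∑ b ∈ (Fintype.piFinset (fun _ : Fin c => Icc 1 (k + 1))).filter
          (fun b => mins (k + 1) b = m),
        muV p (k + 1) b * T ^ (-(t * mins (k + 1) b : ℤ)))
      = ((∑ a ∈ Icc m (k + 1), mu p (k + 1) a) ^ c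
          - (∑ a ∈ Icc (m + 1) (k + 1), mu p (k + 1) a) ^ c) * T ^ (-(t * m : ℤ)) := by
    intro m hm
    rw [mem_Icc] at hm
    rw [Finset.sum_congr rfl (fun b hb => by rw [(mem_filter.1 hb).2]),
      filter_mins_eq c (k + 1) m hc hm.1 hm.2, ← Finset.sum_mul]
    congr 1
    rw [Finset.sum_sdiff_eq_sub (Fintype.piFinset_subset _ _
      (fun _ => Finset.Icc_subset_Icc_left (Nat.le_succ m)))]
    unfold muV
    rw [sum_piFinset_prod, sum_piFinset_prod]
  rw [Finset.sum_congr rfl hstep, Finset.sum_Icc_succ_top (Nat.succ_le_succ (Nat.zero_le k))]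
  have htop : ((∑ a ∈ Icc (k + 1) (k + 1), mu p (k + 1) a) ^ c
      - (∑ a ∈ Icc (k + 1 + 1) (k + 1), mu p (k + 1) a) ^ c) = 1 := by
    rw [Finset.Icc_self, Finset.sum_singleton, Finset.Icc_eq_empty (by omega),
      Finset.sum_empty, zero_pow (by omega), mu, if_pos rfl, one_pow, sub_zero]
  rw [htop, one_mul, add_comm]
  congr 1
  refine Finset.sum_congr rfl fun m hm => ?_
  rw [mem_Icc] at hm
  have h1 : ∑ a ∈ Icc m (k + 1), mu p (k + 1) a = p ^ (k + 1 - m) := by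
    have h := sum_mu p hp0 (r := k + 1) (d := k + 1 - m) (by omega)
    rwa [show k + 1 - (k + 1 - m) = m by omega] at h
  have h2 : ∑ a ∈ Icc (m + 1) (k + 1), mu p (k + 1) a = p ^ (k - m) := by
    have h := sum_mu p hp0 (r := k + 1) (d := k - m) (by omega)
    rwa [show k + 1 - (k - m) = m + 1 by omega] at h
  rw [h1, h2]

/-- The crucial lemma:
`Σ_{r≥1} p^{Ar} T^{Br} Σ_{b∈{1,…,r}^c} μ_p(r;b) T^{−t·min{r,b_1,…,b_c}}
 = p^A T^{B−t} (1 − p^A T^B) / ((1 − p^A T^{B−t})(1 − p^{A+c} T^B))`. -/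
theorem crucial_lemma_sum (p T : ℝ) (hp : 1 < p) (A B t c : ℕ)
    (hB : 1 ≤ B) (ht : 1 ≤ t) (hc : 1 ≤ c) (hT : 0 < T)
    (h1 : p ^ A * T ^ ((B : ℤ) - t) < 1) (h2 : p ^ (A + c) * T ^ B < 1) :
    HasSum (fun k : ℕ =>
        p ^ (A * (k + 1)) * T ^ (B * (k + 1)) *
          ∑ b ∈ Fintype.piFinset (fun _ : Fin c => Icc 1 (k + 1)),
            muV p (k + 1) b * T ^ (-(t * mins (k + 1) b : ℤ)))
      (p ^ A * T ^ ((B : ℤ) - t) * (1 - p ^ A * T ^ B) /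
        ((1 - p ^ A * T ^ ((B : ℤ) - t)) * (1 - p ^ (A + c) * T ^ B))) := by
  have hp0 : (0 : ℝ) < p := lt_trans one_pos hp
  have hT0 : T ≠ 0 := ne_of_gt hT
  set x : ℝ := p ^ A * T ^ ((B : ℤ) - t) with hxdef
  set y : ℝ := p ^ (A + c) * T ^ B with hydef
  have hx0 : 0 < x := by positivity
  have hy0 : 0 < y := by positivity
  set C : ℝ := 1 - (p⁻¹) ^ c with hCdef
  have hgx : HasSum (fun n : ℕ => x ^ (n + 1)) (x / (1 - x)) := by
    have h := (hasSum_geometric_of_lt_one hx0.le h1).mul_left x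
    simpa [pow_succ, mul_comm, div_eq_mul_inv] using h
  have hgy : HasSum (fun n : ℕ => y ^ (n + 1)) (y / (1 - y)) := by
    have h := (hasSum_geometric_of_lt_one hy0.le h2).mul_left y
    simpa [pow_succ, mul_comm, div_eq_mul_inv] using h
  have hnx : Summable fun n : ℕ => ‖x ^ (n + 1)‖ := by
    simpa [Real.norm_of_nonneg (pow_nonneg hx0.le _)] using hgx.summable
  have hny : Summable fun n : ℕ => ‖y ^ (n + 1)‖ := by
    simpa [Real.norm_of_nonneg (pow_nonneg hy0.le _)] using hgy.summable
  have hcauchy : HasSum (fun n : ℕ => ∑ i ∈ range (n + 1), x ^ (i + 1) * y ^ (n - i + 1))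
      ((x / (1 - x)) * (y / (1 - y))) := by
    have h := hasSum_sum_range_mul_of_summable_norm hnx hny
    rwa [hgx.tsum_eq, hgy.tsum_eq] at h
  have heq : (fun n : ℕ => ∑ i ∈ range (n + 1), x ^ (i + 1) * y ^ (n + 1 - i))
      = (fun n : ℕ => ∑ i ∈ range (n + 1), x ^ (i + 1) * y ^ (n - i + 1)) := by
    funext n
    refine Finset.sum_congr rfl fun i hi => ?_
    rw [mem_range] at hi
    congr 2
    omega
  have hshift : HasSum (fun n : ℕ => ∑ i ∈ range (n + 1), x ^ (i + 1) * y ^ (n + 1 - i))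
      ((x / (1 - x)) * (y / (1 - y))) := by rw [heq]; exact hcauchy
  have hG : HasSum (fun n : ℕ => ∑ i ∈ range n, x ^ (i + 1) * y ^ (n - i))
      ((x / (1 - x)) * (y / (1 - y))) := by
    have h := (hasSum_nat_add_iff
      (f := fun n : ℕ => ∑ i ∈ range n, x ^ (i + 1) * y ^ (n - i)) 1).1 hshift
    simpa using h
  have hkey : ∀ k : ℕ,
      p ^ (A * (k + 1)) * T ^ (B * (k + 1)) *
        ∑ b ∈ Fintype.piFinset (fun _ : Fin c => Icc 1 (k + 1)),
          muV p (k + 1) b * T ^ (-(t * mins (k + 1) b : ℤ))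
      = x ^ (k + 1) + C * ∑ i ∈ range k, x ^ (i + 1) * y ^ (k - i) := by
    intro k
    rw [inner_sum_eq p T hp t c k hc hT]
    rw [hxdef, hydef, hCdef]
    rw [mul_add]
    congr 1
    · rw [mul_pow, ← pow_mul, ← zpow_natCast (T ^ ((B : ℤ) - t)) (k + 1), ← zpow_mul,
        mul_assoc, ← zpow_natCast T (B * (k + 1)), ← zpow_add₀ hT0]
      congr 1
      push_cast
      ring
    · rw [Finset.mul_sum, Finset.mul_sum, ← Finset.Ico_add_one_right_eq_Icc, Finset.sum_Ico_eq_sum_range]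
      refine Finset.sum_congr rfl fun i hi => ?_
      rw [mem_range] at hi
      obtain ⟨j, rfl⟩ : ∃ j, k = i + j + 1 := ⟨k - i - 1, by omega⟩
      rw [show i + j + 1 + 1 - (1 + i) = j + 1 by omega, show i + j + 1 - (1 + i) = j by omega,
        show i + j + 1 - i = j + 1 by omega]
      have hdiff : (p ^ (j + 1)) ^ c - (p ^ j) ^ c = (p ^ (j + 1)) ^ c * (1 - (p⁻¹) ^ c) := by
        rw [mul_sub, mul_one]
        congr 1
        rw [← mul_pow, pow_succ, mul_assoc, mul_inv_cancel₀ (ne_of_gt hp0), mul_one]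
      rw [hdiff]
      rw [mul_pow, mul_pow, ← pow_mul, ← pow_mul, ← pow_mul, ← pow_mul,
        ← zpow_natCast (T ^ ((B : ℤ) - t)) (i + 1), ← zpow_mul,
        ← zpow_natCast T (B * (i + j + 1 + 1)), ← zpow_natCast T (B * (j + 1))]
      have comb1 : ∀ (s : ℝ) (a b : ℕ) (u v : ℤ),
          p ^ a * T ^ u * (p ^ b * s * T ^ v) = s * (p ^ (a + b) * T ^ (u + v)) := by
        intro s a b u v
        rw [pow_add, zpow_add₀ hT0]; ring
      have comb2 : ∀ (a b : ℕ) (u v : ℤ),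
          p ^ a * T ^ u * (p ^ b * T ^ v) = p ^ (a + b) * T ^ (u + v) := by
        intro a b u v
        rw [pow_add, zpow_add₀ hT0]; ring
      rw [comb1, comb2]
      congr 2
      · ring
      · push_cast
        ring
  have hfun : (fun k : ℕ =>
      p ^ (A * (k + 1)) * T ^ (B * (k + 1)) *
        ∑ b ∈ Fintype.piFinset (fun _ : Fin c => Icc 1 (k + 1)),
          muV p (k + 1) b * T ^ (-(t * mins (k + 1) b : ℤ)))
      = fun k : ℕ => x ^ (k + 1) + C * ∑ i ∈ range k, x ^ (i + 1) * y ^ (k - i) :=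
    funext hkey
  rw [hfun]
  have hsum := hgx.add (hG.mul_left C)
  have hq : p ^ A * T ^ B = y * (p⁻¹) ^ c := by
    rw [hydef, pow_add]
    rw [mul_assoc, mul_comm (T ^ B), ← mul_assoc, mul_assoc (p ^ A), ← mul_pow,
      mul_inv_cancel₀ (ne_of_gt hp0), one_pow, mul_one]
  have hx1 : (1 : ℝ) - x ≠ 0 := ne_of_gt (by linarith)
  have hy1 : (1 : ℝ) - y ≠ 0 := ne_of_gt (by linarith)
  have hval : x * (1 - p ^ A * T ^ B) / ((1 - x) * (1 - y))
      = x / (1 - x) + C * (x / (1 - x) * (y / (1 - y))) := by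
    rw [hq, hCdef]
    field_simp
    ring
  rw [hval]
  exact hsum
end
end

section
/- For every real p ≥ 2 and every real T with 0 < T ≤ p^{−9}: S_2(p,T) + (p+1) · S_{12}(p,T) = ( (1 + p^{7} T^{3}) / (1 − p^{8} T^{3}) ) · S_2(p,T). (This is the identity ∑_{J_1 ⊆ {1*}} b_{J_1}(p)(A_{J_1∪2*} − A_{J_1∪2}) = I_1(Y_1)·(A_{2*} − A_2) with Y_1 = p^8 T^3 and I_1(Y_1) = 1 + (1+p^{−1})·Y_1/(1−Y_1).) -/
open Finset

noncomputable section

/-- The `(r₁,r₂)`-term of the series `S₁₂(p,T) = A_{1*,2*} − A_{1*,2}`. -/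
def S12term (p T : ℝ) (r1 r2 : ℕ) : ℝ :=
  p ^ (8 * r2 + 4 * r1) * T ^ (6 * r2 + 5 * r1) *
    ∑ a15 ∈ Icc 1 (r1 + r2), ∑ a14 ∈ Icc 1 (r1 + r2), ∑ a13 ∈ Icc 1 (r1 + r2),
      ∑ a12 ∈ Icc 1 (r1 + r2), ∑ a11 ∈ Icc 1 r1, ∑ a25 ∈ Icc 1 r2, ∑ a24 ∈ Icc 1 r2,
        ∑ a23 ∈ Icc 1 r2, ∑ a22 ∈ Icc 1 r2,
          mu p (r1 + r2) a15 * mu p (r1 + r2) a14 * mu p (r1 + r2) a13 * mu p (r1 + r2) a12 *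
            mu p r1 a11 * mu p r2 a25 * mu p r2 a24 * mu p r2 a23 * mu p r2 a22 *
            (T ^ (-(min r1 a15 +
                min (r1 + r2) (min a15 (min (a25 + r1) (a24 + r1))) : ℤ)) -
              T ^ (-(2 * min r1 a15 : ℤ)))

/-- The `r`-term of the series `S₂(p,T) = A_{2*} − A_2`. -/
def S2term (p T : ℝ) (r : ℕ) : ℝ :=
  p ^ (8 * r) * T ^ (6 * r) *
    ∑ b ∈ Fintype.piFinset (fun _ : Fin 8 => Icc 1 r),
      muV p r b *
        (T ^ (-(min r (min (b 0) (min (b 1) (b 2))) : ℤ)) - 1)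

lemma mu_nonneg {p : ℝ} (hp : 2 ≤ p) (a b : ℕ) : 0 ≤ mu p a b := by
  have h0 : (0:ℝ) < p := by linarith
  have h1 : p⁻¹ ≤ 1 := by
    rw [inv_le_one_iff₀]; right; linarith
  unfold mu
  split
  · norm_num
  · exact mul_nonneg (pow_nonneg h0.le _) (by linarith)

lemma sum_mu_s14 {p : ℝ} (hp : p ≠ 0) : ∀ {a : ℕ}, 1 ≤ a →
    ∑ b ∈ Icc 1 a, mu p a b = p ^ a * p⁻¹ := by
  intro a
  induction a with
  | zero => omega
  | succ n ih =>
    intro _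
    by_cases hn : n = 0
    · subst hn
      simp [mu, pow_one, mul_inv_cancel₀ hp]
    · have hn1 : 1 ≤ n := Nat.one_le_iff_ne_zero.2 hn
      rw [Finset.sum_Icc_succ_top (by omega : 1 ≤ n + 1)]
      have hstep : ∀ b ∈ Icc 1 n, mu p (n+1) b
          = p * mu p n b - (if b = n then 1 else 0) := by
        intro b hb
        rw [Finset.mem_Icc] at hb
        by_cases hbn : b = n
        · simp only [mu, if_neg (by omega : ¬ b = n + 1), if_pos hbn, if_pos hbn]
          rw [hbn, (by omega : n + 1 - n = 1), pow_one]
          field_simp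
        · have hblt : b < n := by omega
          simp only [mu, if_neg (by omega : ¬ b = n+1), if_neg hbn, if_neg (by omega : ¬ (b = n))]
          have : n + 1 - b = (n - b) + 1 := by omega
          rw [this, pow_succ]
          ring
      rw [Finset.sum_congr rfl hstep, Finset.sum_sub_distrib, ← Finset.mul_sum, ih hn1,
        Finset.sum_ite_eq' (Icc 1 n) n (fun _ => (1:ℝ)), if_pos (by simp [Finset.mem_Icc]; omega)]
      simp only [mu, if_pos rfl, eq_self_iff_true, if_true]
      field_simp
      ring

lemma mu_add (p : ℝ) (r1 r2 s : ℕ) : mu p (r1 + r2) (r1 + s) = mu p r2 s := by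
  unfold mu
  by_cases h : s = r2
  · rw [if_pos (by omega), if_pos h]
  · rw [if_neg (by omega), if_neg h, (by omega : r1 + r2 - (r1 + s) = r2 - s)]

lemma sum_piFinset_succ {n : ℕ} (s : Finset ℕ) (F : (Fin (n+1) → ℕ) → ℝ) :
    ∑ b ∈ Fintype.piFinset (fun _ : Fin (n+1) => s), F b
      = ∑ x ∈ s, ∑ b ∈ Fintype.piFinset (fun _ : Fin n => s), F (Fin.cons x b) := by
  rw [← Finset.sum_product']
  refine Finset.sum_nbij' (fun b => (b 0, Fin.tail b)) (fun q => Fin.cons q.1 q.2) ?_ ?_ ?_ ?_ ?_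
  · intro b hb
    simp only [Fintype.mem_piFinset] at hb
    simp only [Finset.mem_product, Fintype.mem_piFinset]
    exact ⟨hb 0, fun i => hb i.succ⟩
  · intro q hq
    simp only [Finset.mem_product, Fintype.mem_piFinset] at hq
    simp only [Fintype.mem_piFinset]
    intro i
    refine Fin.cases ?_ ?_ i
    · simpa using hq.1
    · intro j; simpa using hq.2 j
  · intro b _; exact Fin.cons_self_tail b
  · intro q _; simp [Fin.tail_cons]
  · intro b _
    conv_lhs => rw [← Fin.cons_self_tail b]

lemma sum_piFinset_zero (s : Finset ℕ) (F : (Fin 0 → ℕ) → ℝ) :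
    ∑ b ∈ Fintype.piFinset (fun _ : Fin 0 => s), F b = F (fun i => i.elim0) := by
  rw [Fintype.piFinset_of_isEmpty, Finset.univ_unique, Finset.sum_singleton]
  congr

lemma cons8_one (x : ℕ) (f : Fin 7 → ℕ) : (Fin.cons x f : Fin 8 → ℕ) 1 = f 0 := rfl

lemma cons8_two (x : ℕ) (f : Fin 7 → ℕ) : (Fin.cons x f : Fin 8 → ℕ) 2 = f 1 := rfl

lemma cons7_one (x : ℕ) (f : Fin 6 → ℕ) : (Fin.cons x f : Fin 7 → ℕ) 1 = f 0 := rfl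

def Cdef (p T : ℝ) (r : ℕ) : ℝ :=
  ∑ x ∈ Icc 1 r, ∑ y ∈ Icc 1 r, ∑ z ∈ Icc 1 r,
    mu p r x * mu p r y * mu p r z *
      (T ^ (-(min r (min x (min y z)) : ℤ)) - 1)

lemma S2_eval {p T : ℝ} (hp : p ≠ 0) {r : ℕ} (hr : 1 ≤ r) :
    S2term p T r = p ^ (8*r) * T ^ (6*r) * ((p ^ r * p⁻¹) ^ 5 * Cdef p T r) := by
  unfold S2term
  congr 1
  have step1 : (∑ b ∈ Fintype.piFinset (fun _ : Fin 8 => Icc 1 r),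
      muV p r b * (T ^ (-(min r (min (b 0) (min (b 1) (b 2))) : ℤ)) - 1))
      = ∑ x0 ∈ Icc 1 r, (mu p r x0 * ∑ x1 ∈ Icc 1 r, (mu p r x1 *
          ∑ x2 ∈ Icc 1 r, (mu p r x2 *
            ((T ^ (-(min r (min x0 (min x1 x2)) : ℤ)) - 1) *
              ((∑ x ∈ Icc 1 r, mu p r x) * ((∑ x ∈ Icc 1 r, mu p r x) *
               ((∑ x ∈ Icc 1 r, mu p r x) * ((∑ x ∈ Icc 1 r, mu p r x) *
                (∑ x ∈ Icc 1 r, mu p r x))))))))) := by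
    simp only [sum_piFinset_succ, sum_piFinset_zero, muV, Fin.prod_univ_succ,
      Fin.prod_univ_zero, Fin.cons_zero, Fin.cons_succ, cons8_one, cons8_two, cons7_one,
      mul_one, Finset.mul_sum, Finset.sum_mul]
    refine Finset.sum_congr rfl fun x0 _ => Finset.sum_congr rfl fun x1 _ =>
      Finset.sum_congr rfl fun x2 _ => Finset.sum_congr rfl fun x3 _ =>
      Finset.sum_congr rfl fun x4 _ => Finset.sum_congr rfl fun x5 _ =>
      Finset.sum_congr rfl fun x6 _ => Finset.sum_congr rfl fun x7 _ => by ring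
  rw [step1]
  simp only [sum_mu_s14 hp hr]
  unfold Cdef
  simp only [Finset.mul_sum, Finset.sum_mul]
  refine Finset.sum_congr rfl fun x0 _ => Finset.sum_congr rfl fun x1 _ =>
    Finset.sum_congr rfl fun x2 _ => by ring

lemma brkt {T : ℝ} (hT0 : T ≠ 0) (r1 r2 s a25 a24 : ℕ) :
    (T ^ (-(min (r1:ℤ) ((r1:ℤ) + (s:ℤ)) +
        min ((r1:ℤ) + (r2:ℤ)) (min ((r1:ℤ) + (s:ℤ)) (min ((a25:ℤ) + (r1:ℤ)) ((a24:ℤ) + (r1:ℤ)))))) -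
      T ^ (-(2 * min (r1:ℤ) ((r1:ℤ) + (s:ℤ)))))
    = T ^ (-(2 * (r1:ℤ))) * (T ^ (-(min (r2:ℤ) (min (s:ℤ) (min (a25:ℤ) (a24:ℤ))))) - 1) := by
  have h1 : (-(min (r1:ℤ) ((r1:ℤ) + (s:ℤ)) +
        min ((r1:ℤ) + (r2:ℤ)) (min ((r1:ℤ) + (s:ℤ)) (min ((a25:ℤ) + (r1:ℤ)) ((a24:ℤ) + (r1:ℤ))))))
      = (-(2 * (r1:ℤ))) + (-(min (r2:ℤ) (min (s:ℤ) (min (a25:ℤ) (a24:ℤ))))) := by omega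
  have h2 : (-(2 * min (r1:ℤ) ((r1:ℤ) + (s:ℤ)))) = (-(2 * (r1:ℤ))) + 0 := by omega
  rw [h1, h2, zpow_add₀ hT0, zpow_add₀ hT0, zpow_zero]
  ring

lemma S12_eval {p T : ℝ} (hp : p ≠ 0) (hT0 : T ≠ 0) {r1 r2 : ℕ} (hr1 : 1 ≤ r1) (hr2 : 1 ≤ r2) :
    S12term p T r1 r2 = p ^ (8 * r2 + 4 * r1) * T ^ (6 * r2 + 5 * r1) *
      ((p ^ (r1 + r2) * p⁻¹) ^ 3 * ((p ^ r1 * p⁻¹) * ((p ^ r2 * p⁻¹) ^ 2 *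
        (T ^ (-(2 * r1 : ℤ)) * Cdef p T r2)))) := by
  unfold S12term
  congr 1
  refine Eq.trans (Finset.sum_subset
    (show Ioc r1 (r1 + r2) ⊆ Icc 1 (r1 + r2) from fun x hx => by
      rw [Finset.mem_Ioc] at hx; rw [Finset.mem_Icc]; omega)
    (fun a15 h1 h2 => ?_)).symm ?_
  · -- terms with a15 ≤ r1 vanish
    rw [Finset.mem_Icc] at h1
    rw [Finset.mem_Ioc, not_and_or, not_lt] at h2
    have ha15 : a15 ≤ r1 := by omega
    refine Finset.sum_eq_zero fun a14 _ => Finset.sum_eq_zero fun a13 _ =>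
      Finset.sum_eq_zero fun a12 _ => Finset.sum_eq_zero fun a11 _ =>
      Finset.sum_eq_zero fun a25 _ => Finset.sum_eq_zero fun a24 _ =>
      Finset.sum_eq_zero fun a23 _ => Finset.sum_eq_zero fun a22 _ => ?_
    rw [show (-(min r1 a15 +
        min (r1 + r2) (min a15 (min (a25 + r1) (a24 + r1))) : ℤ)) =
        (-(2 * min r1 a15 : ℤ)) from by omega]
    rw [sub_self, mul_zero]
  · -- reindex a15 = r1 + s and evaluate
    rw [show Ioc r1 (r1 + r2) = Finset.map (addLeftEmbedding r1) (Ioc 0 r2) from by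
      rw [Finset.map_add_left_Ioc]; simp, Finset.sum_map]
    simp only [addLeftEmbedding_apply]
    push_cast
    calc
      _ = ∑ s ∈ Ioc 0 r2,
            ((∑ a25 ∈ Icc 1 r2, (mu p r2 a25 *
                ∑ a24 ∈ Icc 1 r2, (mu p r2 a24 *
                  (mu p r2 s *
                    (T ^ (-(2 * r1 : ℤ)) *
                      (T ^ (-(min r2 (min s (min a25 a24)) : ℤ)) - 1)) *
                    ((∑ x ∈ Icc 1 r2, mu p r2 x) * (∑ x ∈ Icc 1 r2, mu p r2 x)))))) *
              ((∑ x ∈ Icc 1 r1, mu p r1 x) *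
                ((∑ x ∈ Icc 1 (r1+r2), mu p (r1+r2) x) *
                  ((∑ x ∈ Icc 1 (r1+r2), mu p (r1+r2) x) *
                    (∑ x ∈ Icc 1 (r1+r2), mu p (r1+r2) x))))) := by
        refine Finset.sum_congr rfl fun s _ => ?_
        simp only [Finset.mul_sum, Finset.sum_mul]
        refine Finset.sum_congr rfl fun a14 _ => Finset.sum_congr rfl fun a13 _ =>
          Finset.sum_congr rfl fun a12 _ => Finset.sum_congr rfl fun a11 _ =>
          Finset.sum_congr rfl fun a25 _ => Finset.sum_congr rfl fun a24 _ =>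
          Finset.sum_congr rfl fun a23 _ => Finset.sum_congr rfl fun a22 _ => ?_
        rw [mu_add p r1 r2 s, brkt hT0 r1 r2 s a25 a24]
        ring
      _ = _ := by
        simp only [sum_mu_s14 hp (show 1 ≤ r1 + r2 by omega), sum_mu_s14 hp hr1, sum_mu_s14 hp hr2]
        rw [show Ioc 0 r2 = Icc 1 r2 from by
          ext x; rw [Finset.mem_Ioc, Finset.mem_Icc]; omega]
        unfold Cdef
        simp only [Finset.mul_sum, Finset.sum_mul]
        refine Finset.sum_congr rfl fun s _ => Finset.sum_congr rfl fun a25 _ =>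
          Finset.sum_congr rfl fun a24 _ => ?_
        ring

lemma S12_eq {p T : ℝ} (hp : p ≠ 0) (hT0 : T ≠ 0) {r1 r2 : ℕ} (hr1 : 1 ≤ r1) (hr2 : 1 ≤ r2) :
    S12term p T r1 r2 = p ^ (8 * r1) * p⁻¹ * T ^ (3 * r1) * S2term p T r2 := by
  rw [S12_eval hp hT0 hr1 hr2, S2_eval hp hr2,
    show (-(2 * (r1:ℤ))) = -((2 * r1 : ℕ) : ℤ) from by push_cast; ring,
    zpow_neg, zpow_natCast]
  field_simp
  ring

lemma S2_nonneg {p T : ℝ} (hp : 2 ≤ p) (hT0 : 0 < T) (hT1 : T ≤ 1) (r : ℕ) :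
    0 ≤ S2term p T r := by
  have hp0 : (0:ℝ) < p := by linarith
  unfold S2term
  have : ∀ b ∈ Fintype.piFinset (fun _ : Fin 8 => Icc 1 r),
      0 ≤ muV p r b * (T ^ (-(min r (min (b 0) (min (b 1) (b 2))) : ℤ)) - 1) := by
    intro b _
    refine mul_nonneg (Finset.prod_nonneg fun j _ => mu_nonneg hp _ _) ?_
    have h1 : T ^ (0:ℤ) ≤ T ^ (-(min r (min (b 0) (min (b 1) (b 2))) : ℤ)) :=
      zpow_le_zpow_right_of_le_one₀ hT0 hT1 (by omega)
    rw [zpow_zero] at h1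
    linarith
  have hsum : 0 ≤ ∑ b ∈ Fintype.piFinset (fun _ : Fin 8 => Icc 1 r),
      muV p r b * (T ^ (-(min r (min (b 0) (min (b 1) (b 2))) : ℤ)) - 1) :=
    Finset.sum_nonneg this
  positivity

lemma S2_le {p T : ℝ} (hp : 2 ≤ p) (hT0 : 0 < T) (hT1 : T ≤ 1) {r : ℕ} (hr : 1 ≤ r) :
    S2term p T r ≤ (p ^ 16 * T ^ 5) ^ r := by
  have hp0 : (0:ℝ) < p := by linarith
  have hp1 : (1:ℝ) ≤ p := by linarith
  unfold S2term
  have hstep : ∀ b ∈ Fintype.piFinset (fun _ : Fin 8 => Icc 1 r),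
      muV p r b * (T ^ (-(min r (min (b 0) (min (b 1) (b 2))) : ℤ)) - 1)
        ≤ muV p r b * T ^ (-(r:ℤ)) := by
    intro b _
    refine mul_le_mul_of_nonneg_left ?_ (Finset.prod_nonneg fun j _ => mu_nonneg hp _ _)
    have h1 : T ^ (-(min r (min (b 0) (min (b 1) (b 2))) : ℤ)) ≤ T ^ (-(r:ℤ)) :=
      zpow_le_zpow_right_of_le_one₀ hT0 hT1 (by omega)
    linarith
  have h2 : (∑ b ∈ Fintype.piFinset (fun _ : Fin 8 => Icc 1 r),
        muV p r b * (T ^ (-(min r (min (b 0) (min (b 1) (b 2))) : ℤ)) - 1))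
      ≤ (p ^ r * p⁻¹) ^ 8 * T ^ (-(r:ℤ)) := by
    refine le_trans (Finset.sum_le_sum hstep) ?_
    rw [← Finset.sum_mul]
    have : (∑ b ∈ Fintype.piFinset (fun _ : Fin 8 => Icc 1 r), muV p r b)
        = (p ^ r * p⁻¹) ^ 8 := by
      unfold muV
      rw [← Finset.prod_univ_sum]
      simp [sum_mu_s14 (show p ≠ 0 by linarith) hr]
    rw [this]
  have hpre : (0:ℝ) ≤ p ^ (8*r) * T ^ (6*r) := by positivity
  calc p ^ (8*r) * T ^ (6*r) * ∑ b ∈ Fintype.piFinset (fun _ : Fin 8 => Icc 1 r),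
        muV p r b * (T ^ (-(min r (min (b 0) (min (b 1) (b 2))) : ℤ)) - 1)
      ≤ p ^ (8*r) * T ^ (6*r) * ((p ^ r * p⁻¹) ^ 8 * T ^ (-(r:ℤ))) :=
        mul_le_mul_of_nonneg_left h2 hpre
    _ = (p ^ 16 * T ^ 5) ^ r * (p⁻¹)^8 := by
        rw [show (-(r:ℤ)) = -((r : ℕ) : ℤ) from by push_cast; ring, zpow_neg, zpow_natCast]
        field_simp
        ring
    _ ≤ (p ^ 16 * T ^ 5) ^ r * 1 := by
        refine mul_le_mul_of_nonneg_left ?_ (by positivity)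
        refine pow_le_one₀ (by positivity) ?_
        rw [inv_le_one_iff₀]; right; linarith
    _ = (p ^ 16 * T ^ 5) ^ r := by rw [mul_one]

/-- The identity `Σ_{J₁⊆{1*}} b_{J₁}(p)(A_{J₁∪2*} − A_{J₁∪2}) = I₁(Y₁)·(A_{2*} − A_2)`:
for `p ≥ 2` and `0 < T ≤ p^{-9}`,
`S₂ + (p+1)·S₁₂ = ((1 + p^7 T^3)/(1 − p^8 T^3)) · S₂`. -/
theorem lower_igusa_identity (p T : ℝ) (hp : 2 ≤ p) (hT0 : 0 < T)
    (hT : T ≤ ((p : ℝ) ^ (9 : ℕ))⁻¹) :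
    (∑' r : ℕ, S2term p T (r + 1)) +
        (p + 1) * ∑' rr : ℕ × ℕ, S12term p T (rr.2 + 1) (rr.1 + 1) =
      (1 + p ^ 7 * T ^ 3) / (1 - p ^ 8 * T ^ 3) * ∑' r : ℕ, S2term p T (r + 1) := by
  have hp0 : (0:ℝ) < p := by linarith
  have hp0' : p ≠ 0 := ne_of_gt hp0
  have hp1 : (1:ℝ) < p := by linarith
  have hT0' : T ≠ 0 := ne_of_gt hT0
  have hT1 : T ≤ 1 := hT.trans (by
    rw [inv_le_one_iff₀]; right; exact one_le_pow₀ (by linarith))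
  -- geometric ratio facts
  have hTp : ∀ k m : ℕ, 9 * k = m → T ^ k ≤ (p ^ m)⁻¹ := by
    intro k m hm
    have h1 : T ^ k ≤ ((p ^ (9:ℕ))⁻¹) ^ k := pow_le_pow_left₀ hT0.le hT k
    rw [← inv_pow, ← pow_mul, (by omega : 9 * k = m), inv_pow] at h1
    exact h1
  have hq1 : p ^ 8 * T ^ 3 < 1 := by
    have h1 : T ^ 3 ≤ (p ^ 27)⁻¹ := hTp 3 27 rfl
    have h2 : p ^ 8 * T ^ 3 ≤ p ^ 8 * (p ^ 27)⁻¹ :=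
      mul_le_mul_of_nonneg_left h1 (by positivity)
    have h3 : p ^ 8 * (p ^ 27)⁻¹ = (p ^ 19)⁻¹ := by
      field_simp
    have h4 : (p ^ 19 : ℝ)⁻¹ < 1 := by
      rw [inv_lt_one_iff₀]; right; exact one_lt_pow₀ hp1 (by norm_num)
    calc p ^ 8 * T ^ 3 ≤ (p ^ 19)⁻¹ := by rw [← h3]; exact h2
      _ < 1 := h4
  have hq0 : (0:ℝ) ≤ p ^ 8 * T ^ 3 := by positivity
  have hc1 : p ^ 16 * T ^ 5 < 1 := by
    have h1 : T ^ 5 ≤ (p ^ 45)⁻¹ := hTp 5 45 rfl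
    have h2 : p ^ 16 * T ^ 5 ≤ p ^ 16 * (p ^ 45)⁻¹ :=
      mul_le_mul_of_nonneg_left h1 (by positivity)
    have h3 : p ^ 16 * (p ^ 45 : ℝ)⁻¹ = (p ^ 29)⁻¹ := by
      field_simp
    have h4 : (p ^ 29 : ℝ)⁻¹ < 1 := by
      rw [inv_lt_one_iff₀]; right; exact one_lt_pow₀ hp1 (by norm_num)
    calc p ^ 16 * T ^ 5 ≤ (p ^ 29)⁻¹ := by rw [← h3]; exact h2
      _ < 1 := h4
  have hc0 : (0:ℝ) ≤ p ^ 16 * T ^ 5 := by positivity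
  -- summability
  have hfnorm : Summable (fun k : ℕ => ‖S2term p T (k + 1)‖) := by
    refine Summable.of_nonneg_of_le (fun k => norm_nonneg _)
      (fun k => ?_) (((summable_geometric_of_lt_one hc0 hc1).mul_left (p ^ 16 * T ^ 5))) 
    rw [Real.norm_of_nonneg (S2_nonneg hp hT0 hT1 _)]
    calc S2term p T (k+1) ≤ (p ^ 16 * T ^ 5) ^ (k+1) := S2_le hp hT0 hT1 (by omega)
      _ = (p ^ 16 * T ^ 5) * (p ^ 16 * T ^ 5) ^ k := by rw [pow_succ]; ring
  have hgnorm : Summable (fun k : ℕ => ‖p⁻¹ * (p ^ 8 * T ^ 3) ^ (k + 1)‖) := by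
    refine Summable.of_nonneg_of_le (fun k => norm_nonneg _) (fun k => ?_)
      (((summable_geometric_of_lt_one hq0 hq1).mul_left (p⁻¹ * (p ^ 8 * T ^ 3))))
    rw [Real.norm_of_nonneg (by positivity)]
    rw [pow_succ]
    have : (0:ℝ) ≤ (p ^ 8 * T ^ 3) ^ k := by positivity
    calc p⁻¹ * ((p ^ 8 * T ^ 3) ^ k * (p ^ 8 * T ^ 3))
        = p⁻¹ * (p ^ 8 * T ^ 3) * (p ^ 8 * T ^ 3) ^ k := by ring
      _ ≤ p⁻¹ * (p ^ 8 * T ^ 3) * (p ^ 8 * T ^ 3) ^ k := le_refl _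
  -- factor the double series
  have key : (∑' rr : ℕ × ℕ, S12term p T (rr.2 + 1) (rr.1 + 1))
      = (∑' k : ℕ, S2term p T (k + 1)) * (∑' k : ℕ, p⁻¹ * (p ^ 8 * T ^ 3) ^ (k + 1)) := by
    rw [tsum_mul_tsum_of_summable_norm hfnorm hgnorm]
    refine tsum_congr fun rr => ?_
    rw [S12_eq hp0' hT0' (show 1 ≤ rr.2 + 1 by omega) (show 1 ≤ rr.1 + 1 by omega)]
    ring
  have hgeo : (∑' k : ℕ, p⁻¹ * (p ^ 8 * T ^ 3) ^ (k + 1))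
      = p⁻¹ * ((p ^ 8 * T ^ 3) * (1 - p ^ 8 * T ^ 3)⁻¹) := by
    rw [tsum_mul_left]
    congr 1
    have : ∀ k : ℕ, (p ^ 8 * T ^ 3) ^ (k + 1) = (p ^ 8 * T ^ 3) ^ k * (p ^ 8 * T ^ 3) :=
      fun k => pow_succ _ _
    rw [tsum_congr this, tsum_mul_right, tsum_geometric_of_lt_one hq0 hq1]
    ring
  rw [key, hgeo]
  have hden : (1 : ℝ) - p ^ 8 * T ^ 3 ≠ 0 := by
    have : (0:ℝ) < 1 - p ^ 8 * T ^ 3 := by linarith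
    exact ne_of_gt this
  field_simp
  ring
end
end
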